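/- In the extended composition with wildcard receives, a non-wildcard SR action enabled at a global state σ is independent of every other action enabled at σ (including SR* actions with disjoint participant sets): each remains enabled after the other and they commute. -/
import Mathlib


/-- Local actions of an MPI process: send to a specific destination, receive
from a specific source, wildcard receive (from any source), or barrier. -/
inductive WAct (n : ℕ) where
  | send (dest : Fin n)
  | recv (src : Fin n)
  | recvAny
  | barrier
deriving DecidableEq

/-- Global actions of the parallel composition with wildcard receives:
`B` (global barrier), `SR i j` (send from `i` matched with the specific
receive at `j`), and `SRW i j` (send from `i` matched with the wildcard
receive at `j`). -/
inductive WGAct (n : ℕ) where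
  | B
  | SR (i j : Fin n)
  | SRW (i j : Fin n)
deriving DecidableEq


section Aux
variable {n : ℕ} {L : Fin n → Type}

noncomputable def Uaux (adv : ∀ i, L i → L i) (i j : Fin n) (σ : ∀ i, L i) : ∀ i, L i :=
  Function.update (Function.update σ i (adv i (σ i))) j (adv j (σ j))

lemma Uaux_ne (adv : ∀ i, L i → L i) (i j k : Fin n) (σ : ∀ i, L i)
    (hki : k ≠ i) (hkj : k ≠ j) : Uaux adv i j σ k = σ k := by
  simp [Uaux, Function.update_of_ne hki, Function.update_of_ne hkj]

lemma Uaux_snd (adv : ∀ i, L i → L i) (i j : Fin n) (σ : ∀ i, L i) :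
    Uaux adv i j σ j = adv j (σ j) := by simp [Uaux]

lemma Uaux_fst (adv : ∀ i, L i → L i) (i j : Fin n) (σ : ∀ i, L i) (hij : i ≠ j) :
    Uaux adv i j σ i = adv i (σ i) := by
  simp [Uaux, Function.update_of_ne hij]

lemma Uaux_comm (adv : ∀ i, L i → L i) (i j a b : Fin n) (σ : ∀ i, L i)
    (hij : i ≠ j) (hab : a ≠ b)
    (hai : a ≠ i) (haj : a ≠ j) (hbi : b ≠ i) (hbj : b ≠ j) :
    Uaux adv a b (Uaux adv i j σ) = Uaux adv i j (Uaux adv a b σ) := by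
  have h1 : (Uaux adv i j σ) a = σ a := Uaux_ne adv i j a σ hai haj
  have h2 : (Uaux adv i j σ) b = σ b := Uaux_ne adv i j b σ hbi hbj
  have h3 : (Uaux adv a b σ) i = σ i := Uaux_ne adv a b i σ hai.symm hbi.symm
  have h4 : (Uaux adv a b σ) j = σ j := Uaux_ne adv a b j σ haj.symm hbj.symm
  funext k
  by_cases hkb : k = b
  · rw [hkb, Uaux_snd, h2, Uaux_ne adv i j b _ hbi hbj, Uaux_snd]
  by_cases hka : k = a
  · rw [hka, Uaux_fst adv a b _ hab, h1, Uaux_ne adv i j a _ hai haj,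
        Uaux_fst adv a b _ hab]
  rw [Uaux_ne adv a b k _ hka hkb]
  by_cases hkj : k = j
  · rw [hkj, Uaux_snd, Uaux_snd, h4]
  by_cases hki : k = i
  · rw [hki, Uaux_fst adv i j _ hij, Uaux_fst adv i j _ hij, h3]
  rw [Uaux_ne adv i j k σ hki hkj, Uaux_ne adv i j k _ hki hkj,
      Uaux_ne adv a b k σ hka hkb]
end Aux

variable {n : ℕ} {L : Fin n → Type}
/-- Enabledness of global actions in a global state `σ` (an `n`-tuple of local
states), where `next i` gives the unique next local action of deterministic
process `i` (`none` = terminated). -/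
def WEnabled (next : ∀ i, L i → Option (WAct n)) (σ : ∀ i, L i) : WGAct n → Prop
  | .B => ∀ i, next i (σ i) = some .barrier
  | .SR i j => i ≠ j ∧ next i (σ i) = some (.send j) ∧ next j (σ j) = some (.recv i)
  | .SRW i j => i ≠ j ∧ next i (σ i) = some (.send j) ∧ next j (σ j) = some .recvAny

open scoped Classical in
/-- The global step function: `B` advances all components, while `SR i j` and
`SRW i j` advance exactly components `i` and `j`. -/
noncomputable def wstep (next : ∀ i, L i → Option (WAct n)) (adv : ∀ i, L i → L i) :
    WGAct n → (∀ i, L i) → Option (∀ i, L i)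
  | .B, σ => if WEnabled next σ .B then some (fun k => adv k (σ k)) else none
  | .SR i j, σ =>
      if WEnabled next σ (.SR i j) then
        some (Function.update (Function.update σ i (adv i (σ i))) j (adv j (σ j)))
      else none
  | .SRW i j, σ =>
      if WEnabled next σ (.SRW i j) then
        some (Function.update (Function.update σ i (adv i (σ i))) j (adv j (σ j)))
      else none

/-- in the extended composition with wildcard receives, a
non-wildcard `SR` action enabled at `σ` is independent of every other action
enabled at `σ`: each remains enabled after the other, and executing them in
either order yields the same global state. -/
theorem stmt14 (next : ∀ i, L i → Option (WAct n)) (adv : ∀ i, L i → L i)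
    (σ : ∀ i, L i) (i j : Fin n) (g : WGAct n)
    (hsr : WEnabled next σ (.SR i j))
    (hg : WEnabled next σ g)
    (hne : g ≠ .SR i j) :
    ∃ σ₁ σ₂,
      wstep next adv (.SR i j) σ = some σ₁ ∧
      wstep next adv g σ = some σ₂ ∧
      WEnabled next σ₁ g ∧
      WEnabled next σ₂ (.SR i j) ∧
      wstep next adv g σ₁ = wstep next adv (.SR i j) σ₂ := by
  obtain ⟨hij, hi, hj⟩ := hsr
  have hSRstep : wstep next adv (.SR i j) σ = some (Uaux adv i j σ) := by
    simp [wstep, Uaux, WEnabled, hij, hi, hj]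
  cases g with
  | B => exact absurd (hg i) (by simp [hi])
  | SR a b =>
    obtain ⟨hab, ha, hb⟩ := hg
    have hai : a ≠ i := by
      rintro rfl
      have := hi.symm.trans ha
      simp only [Option.some.injEq, WAct.send.injEq] at this
      exact hne (by rw [this])
    have haj : a ≠ j := by
      rintro rfl; have := hj.symm.trans ha; simp at this
    have hbi : b ≠ i := by
      rintro rfl; have := hi.symm.trans hb; simp at this
    have hbj : b ≠ j := by
      rintro rfl
      have := hj.symm.trans hb
      simp only [Option.some.injEq, WAct.recv.injEq] at this
      exact hai this.symm
    have hen1 : WEnabled next (Uaux adv i j σ) (.SR a b) :=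
      ⟨hab, by rw [Uaux_ne adv i j a σ hai haj]; exact ha,
        by rw [Uaux_ne adv i j b σ hbi hbj]; exact hb⟩
    have hen2 : WEnabled next (Uaux adv a b σ) (.SR i j) :=
      ⟨hij, by rw [Uaux_ne adv a b i σ hai.symm hbi.symm]; exact hi,
        by rw [Uaux_ne adv a b j σ haj.symm hbj.symm]; exact hj⟩
    refine ⟨Uaux adv i j σ, Uaux adv a b σ, hSRstep, ?_, hen1, hen2, ?_⟩
    · simp [wstep, Uaux, WEnabled, hab, ha, hb]
    · have e1 : wstep next adv (.SR a b) (Uaux adv i j σ) =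
          some (Uaux adv a b (Uaux adv i j σ)) := by
        exact if_pos hen1
      have e2 : wstep next adv (.SR i j) (Uaux adv a b σ) =
          some (Uaux adv i j (Uaux adv a b σ)) := by
        exact if_pos hen2
      rw [e1, e2, Uaux_comm adv i j a b σ hij hab hai haj hbi hbj]
  | SRW a b =>
    obtain ⟨hab, ha, hb⟩ := hg
    have hai : a ≠ i := by
      rintro rfl
      have := hi.symm.trans ha
      simp only [Option.some.injEq, WAct.send.injEq] at this
      subst this
      have := hj.symm.trans hb; simp at this
    have haj : a ≠ j := by
      rintro rfl; have := hj.symm.trans ha; simp at this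
    have hbi : b ≠ i := by
      rintro rfl; have := hi.symm.trans hb; simp at this
    have hbj : b ≠ j := by
      rintro rfl; have := hj.symm.trans hb; simp at this
    have hen1 : WEnabled next (Uaux adv i j σ) (.SRW a b) :=
      ⟨hab, by rw [Uaux_ne adv i j a σ hai haj]; exact ha,
        by rw [Uaux_ne adv i j b σ hbi hbj]; exact hb⟩
    have hen2 : WEnabled next (Uaux adv a b σ) (.SR i j) :=
      ⟨hij, by rw [Uaux_ne adv a b i σ hai.symm hbi.symm]; exact hi,
        by rw [Uaux_ne adv a b j σ haj.symm hbj.symm]; exact hj⟩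
    refine ⟨Uaux adv i j σ, Uaux adv a b σ, hSRstep, ?_, hen1, hen2, ?_⟩
    · simp [wstep, Uaux, WEnabled, hab, ha, hb]
    · have e1 : wstep next adv (.SRW a b) (Uaux adv i j σ) =
          some (Uaux adv a b (Uaux adv i j σ)) := by
        exact if_pos hen1
      have e2 : wstep next adv (.SR i j) (Uaux adv a b σ) =
          some (Uaux adv i j (Uaux adv a b σ)) := by
        exact if_pos hen2
      rw [e1, e2, Uaux_comm adv i j a b σ hij hab hai haj hbi hbj]
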